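/- Let Θ : ℝ¹⁰ → ℝ be a smooth function of (x¹,…,x⁵,y¹,…,y⁵) and set ω_{ik} = Θ_{x^i y^k} − Θ_{x^k y^i}. Then, with ε^{iklm} the Levi-Civita symbol on four indices and all sums over i,k,l,m from 1 to 4, the identity Σ_l ∂_{x^l}[ Σ_{i,k,m} ε^{iklm} ω_{ik} (Θ_{x^m y⁵} − Θ_{x⁵ y^m}) ] = −(1/4) ∂_{x⁵}( Σ ε^{iklm} ω_{ik} ω_{lm} ) holds at every point of ℝ¹⁰. -/

import Mathlib

noncomputable section

/-- Partial derivative of `f : ℝⁿ → ℝ` in the `i`-th coordinate direction. -/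
def pd {n : ℕ} (i : Fin n) (f : (Fin n → ℝ) → ℝ) : (Fin n → ℝ) → ℝ :=
  fun p => fderiv ℝ f p (Pi.single i 1)

/-- `∂/∂x^i` on functions of `(x¹,…,x⁵,y¹,…,y⁵) ∈ ℝ¹⁰`. -/
def px5 (i : Fin 5) (f : (Fin 10 → ℝ) → ℝ) : (Fin 10 → ℝ) → ℝ :=
  pd ⟨i.val, by omega⟩ f

/-- `∂/∂y^i` on functions of `(x¹,…,x⁵,y¹,…,y⁵) ∈ ℝ¹⁰`. -/
def py5 (i : Fin 5) (f : (Fin 10 → ℝ) → ℝ) : (Fin 10 → ℝ) → ℝ :=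
  pd ⟨i.val + 5, by omega⟩ f

/-- Levi-Civita symbol on indices `1,…,4`. -/
def eps4 (i k l m : Fin 4) : ℝ :=
  Matrix.det (Matrix.of fun r c : Fin 4 => if (![i, k, l, m]) r = c then (1 : ℝ) else 0)

/-- `ω_{ik} = Θ_{x^i y^k} − Θ_{x^k y^i}` for `i,k = 1,…,5`. -/
def omg5 (Θ : (Fin 10 → ℝ) → ℝ) (i k : Fin 5) : (Fin 10 → ℝ) → ℝ :=
  fun p => px5 i (py5 k Θ) p - px5 k (py5 i Θ) p

/-- The embedding of the indices `1,…,4` into `1,…,5`. -/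
def e45 (i : Fin 4) : Fin 5 := i.castSucc

/- ## Auxiliary lemmas -/

lemma pd_contDiff {n : ℕ} (i : Fin n) {f : (Fin n → ℝ) → ℝ} (hf : ContDiff ℝ (⊤ : ℕ∞) f) :
    ContDiff ℝ (⊤ : ℕ∞) (pd i f) :=
  ((hf.fderiv_right (mod_cast le_top)).clm_apply contDiff_const)

lemma pd_comm {n : ℕ} (i j : Fin n) {f : (Fin n → ℝ) → ℝ} (hf : ContDiff ℝ (⊤ : ℕ∞) f)
    (p : Fin n → ℝ) : pd i (pd j f) p = pd j (pd i f) p := by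
  have hdf : ContDiff ℝ (⊤ : ℕ∞) (fderiv ℝ f) := hf.fderiv_right (mod_cast le_top)
  have h1 : ∀ q, HasFDerivAt f (fderiv ℝ f q) q :=
    fun q => (hf.differentiable (by simp) q).hasFDerivAt
  have h2 : HasFDerivAt (fderiv ℝ f) (fderiv ℝ (fderiv ℝ f) p) p :=
    (hdf.differentiable (by simp) p).hasFDerivAt
  have hsymm := second_derivative_symmetric h1 h2
  have e : ∀ (u v : Fin n → ℝ), fderiv ℝ (fun q => fderiv ℝ f q u) p v
      = fderiv ℝ (fderiv ℝ f) p v u := by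
    intro u v
    have := ((ContinuousLinearMap.apply ℝ ℝ u).hasFDerivAt.comp p h2).fderiv
    rw [show (fun q => fderiv ℝ f q u) = (ContinuousLinearMap.apply ℝ ℝ u) ∘ (fderiv ℝ f)
      from rfl, this]
    rfl
  show fderiv ℝ (fun q => fderiv ℝ f q (Pi.single j 1)) p (Pi.single i 1)
      = fderiv ℝ (fun q => fderiv ℝ f q (Pi.single i 1)) p (Pi.single j 1)
  rw [e, e]
  exact hsymm _ _

variable {n : ℕ} {p : Fin n → ℝ}

lemma pd_sub (i : Fin n) {f g : (Fin n → ℝ) → ℝ} (hf : DifferentiableAt ℝ f p)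
    (hg : DifferentiableAt ℝ g p) :
    pd i (fun q => f q - g q) p = pd i f p - pd i g p := by
  unfold pd; rw [fderiv_fun_sub hf hg]; rfl

lemma pd_mul (i : Fin n) {f g : (Fin n → ℝ) → ℝ} (hf : DifferentiableAt ℝ f p)
    (hg : DifferentiableAt ℝ g p) :
    pd i (fun q => f q * g q) p = f p * pd i g p + g p * pd i f p := by
  unfold pd; rw [fderiv_fun_mul hf hg]; simp [smul_eq_mul]

lemma pd_const_mul (i : Fin n) (c : ℝ) {f : (Fin n → ℝ) → ℝ} (hf : DifferentiableAt ℝ f p) :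
    pd i (fun q => c * f q) p = c * pd i f p := by
  unfold pd; rw [fderiv_const_mul hf]; simp [smul_eq_mul]

lemma pd_sum {ι : Type*} (i : Fin n) (s : Finset ι) {F : ι → (Fin n → ℝ) → ℝ}
    (hF : ∀ j ∈ s, DifferentiableAt ℝ (F j) p) :
    pd i (fun q => ∑ j ∈ s, F j q) p = ∑ j ∈ s, pd i (F j) p := by
  unfold pd; rw [fderiv_fun_sum hF]; simp

lemma pd_expand3 (d : Fin n) (c : Fin 4 → Fin 4 → Fin 4 → ℝ)
    (A : Fin 4 → Fin 4 → (Fin n → ℝ) → ℝ) (B : Fin 4 → (Fin n → ℝ) → ℝ)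
    (hA : ∀ a b, DifferentiableAt ℝ (A a b) p) (hB : ∀ m, DifferentiableAt ℝ (B m) p) :
    pd d (fun q => ∑ i, ∑ k, ∑ m, c i k m * A i k q * B m q) p
      = ∑ i, ∑ k, ∑ m, c i k m * (pd d (A i k) p * B m p + A i k p * pd d (B m) p) := by
  have h1 : ∀ (a b m : Fin 4), DifferentiableAt ℝ (fun q => c a b m * A a b q * B m q) p :=
    fun a b m => (((hA a b).const_mul _).mul (hB m))
  rw [pd_sum d Finset.univ (fun j _ =>
    DifferentiableAt.fun_sum fun k _ => DifferentiableAt.fun_sum fun m _ => h1 j k m)]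
  refine Finset.sum_congr rfl fun i _ => ?_
  rw [pd_sum d Finset.univ (fun k _ => DifferentiableAt.fun_sum fun m _ => h1 i k m)]
  refine Finset.sum_congr rfl fun k _ => ?_
  rw [pd_sum d Finset.univ (fun m _ => h1 i k m)]
  refine Finset.sum_congr rfl fun m _ => ?_
  have h2 : (fun q => c i k m * A i k q * B m q) = (fun q => c i k m * (A i k q * B m q)) := by
    funext q; ring
  rw [h2, pd_const_mul d _ ((hA i k).fun_mul (hB m)), pd_mul d (hA i k) (hB m)]
  ring

lemma pd_expand4 (d : Fin n) (c : Fin 4 → Fin 4 → Fin 4 → Fin 4 → ℝ)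
    (A B : Fin 4 → Fin 4 → (Fin n → ℝ) → ℝ)
    (hA : ∀ a b, DifferentiableAt ℝ (A a b) p) (hB : ∀ a b, DifferentiableAt ℝ (B a b) p) :
    pd d (fun q => ∑ i, ∑ k, ∑ l, ∑ m, c i k l m * A i k q * B l m q) p
      = ∑ i, ∑ k, ∑ l, ∑ m,
          c i k l m * (pd d (A i k) p * B l m p + A i k p * pd d (B l m) p) := by
  have h1 : ∀ (a b l m : Fin 4), DifferentiableAt ℝ (fun q => c a b l m * A a b q * B l m q) p :=
    fun a b l m => (((hA a b).const_mul _).mul (hB l m))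
  rw [pd_sum d Finset.univ (fun i _ => DifferentiableAt.fun_sum fun k _ =>
    DifferentiableAt.fun_sum fun l _ => DifferentiableAt.fun_sum fun m _ => h1 i k l m)]
  refine Finset.sum_congr rfl fun i _ => ?_
  rw [pd_sum d Finset.univ (fun k _ => DifferentiableAt.fun_sum fun l _ =>
    DifferentiableAt.fun_sum fun m _ => h1 i k l m)]
  refine Finset.sum_congr rfl fun k _ => ?_
  rw [pd_sum d Finset.univ (fun l _ => DifferentiableAt.fun_sum fun m _ => h1 i k l m)]
  refine Finset.sum_congr rfl fun l _ => ?_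
  rw [pd_sum d Finset.univ (fun m _ => h1 i k l m)]
  refine Finset.sum_congr rfl fun m _ => ?_
  have h2 : (fun q => c i k l m * A i k q * B l m q)
      = (fun q => c i k l m * (A i k q * B l m q)) := by funext q; ring
  rw [h2, pd_const_mul d _ ((hA i k).fun_mul (hB l m)), pd_mul d (hA i k) (hB l m)]
  ring

def epsZ (i k l m : Fin 4) : ℤ :=
  Matrix.det (Matrix.of fun r c : Fin 4 => if (![i, k, l, m]) r = c then (1 : ℤ) else 0)

lemma eps4_eq_epsZ (i k l m : Fin 4) : eps4 i k l m = ((epsZ i k l m : ℤ) : ℝ) := by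
  rw [eps4, epsZ]
  refine Eq.symm (((RingHom.map_det (Int.castRingHom ℝ) _).trans ?_))
  congr 1
  ext r c
  simp [Matrix.map_apply, apply_ite]

lemma epsZ_eval : ∀ i k l m : Fin 4, epsZ i k l m =
    ![![![![0, 0, 0, 0], ![0, 0, 0, 0], ![0, 0, 0, 0], ![0, 0, 0, 0]],
       ![![0, 0, 0, 0], ![0, 0, 0, 0], ![0, 0, 0, 1], ![0, 0, -1, 0]],
       ![![0, 0, 0, 0], ![0, 0, 0, -1], ![0, 0, 0, 0], ![0, 1, 0, 0]],
       ![![0, 0, 0, 0], ![0, 0, 1, 0], ![0, -1, 0, 0], ![0, 0, 0, 0]]],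
      ![![![0, 0, 0, 0], ![0, 0, 0, 0], ![0, 0, 0, -1], ![0, 0, 1, 0]],
       ![![0, 0, 0, 0], ![0, 0, 0, 0], ![0, 0, 0, 0], ![0, 0, 0, 0]],
       ![![0, 0, 0, 1], ![0, 0, 0, 0], ![0, 0, 0, 0], ![-1, 0, 0, 0]],
       ![![0, 0, -1, 0], ![0, 0, 0, 0], ![1, 0, 0, 0], ![0, 0, 0, 0]]],
      ![![![0, 0, 0, 0], ![0, 0, 0, 1], ![0, 0, 0, 0], ![0, -1, 0, 0]],
       ![![0, 0, 0, -1], ![0, 0, 0, 0], ![0, 0, 0, 0], ![1, 0, 0, 0]],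
       ![![0, 0, 0, 0], ![0, 0, 0, 0], ![0, 0, 0, 0], ![0, 0, 0, 0]],
       ![![0, 1, 0, 0], ![-1, 0, 0, 0], ![0, 0, 0, 0], ![0, 0, 0, 0]]],
      ![![![0, 0, 0, 0], ![0, 0, -1, 0], ![0, 1, 0, 0], ![0, 0, 0, 0]],
       ![![0, 0, 1, 0], ![0, 0, 0, 0], ![-1, 0, 0, 0], ![0, 0, 0, 0]],
       ![![0, -1, 0, 0], ![1, 0, 0, 0], ![0, 0, 0, 0], ![0, 0, 0, 0]],
       ![![0, 0, 0, 0], ![0, 0, 0, 0], ![0, 0, 0, 0], ![0, 0, 0, 0]]]] i k l m := by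
  decide

set_option maxHeartbeats 4000000 in
theorem stmt11 (Θ : (Fin 10 → ℝ) → ℝ) (hΘ : ContDiff ℝ (⊤ : ℕ∞) Θ) :
    ∀ pt : Fin 10 → ℝ,
      ∑ l : Fin 4, px5 (e45 l)
          (fun q => ∑ i, ∑ k, ∑ m, eps4 i k l m * omg5 Θ (e45 i) (e45 k) q *
            (px5 (e45 m) (py5 (Fin.last 4) Θ) q - px5 (Fin.last 4) (py5 (e45 m) Θ) q)) pt =
        -(1 / 4) * px5 (Fin.last 4)
          (fun q => ∑ i, ∑ k, ∑ l, ∑ m,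
            eps4 i k l m * omg5 Θ (e45 i) (e45 k) q * omg5 Θ (e45 l) (e45 m) q) pt := by
  intro pt
  have hsm1 : ∀ b : Fin 5, ContDiff ℝ (⊤ : ℕ∞) (py5 b Θ) := fun b => pd_contDiff _ hΘ
  have hd2 : ∀ a b : Fin 5, DifferentiableAt ℝ (px5 a (py5 b Θ)) pt :=
    fun a b => ((pd_contDiff _ (hsm1 b)).differentiable (by simp)) pt
  have hdω : ∀ a b : Fin 5, DifferentiableAt ℝ (omg5 Θ a b) pt :=
    fun a b => (hd2 a b).sub (hd2 b a)
  have hdB : ∀ m : Fin 5, DifferentiableAt ℝ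
      (fun q => px5 m (py5 (Fin.last 4) Θ) q - px5 (Fin.last 4) (py5 m Θ) q) pt :=
    fun m => (hd2 _ _).sub (hd2 _ _)
  have hswap : ∀ (c a b : Fin 5), px5 c (px5 a (py5 b Θ)) pt = px5 a (px5 c (py5 b Θ)) pt :=
    fun c a b => pd_comm _ _ (hsm1 b) pt
  have hL : ∀ l : Fin 4, px5 (e45 l)
      (fun q => ∑ i, ∑ k, ∑ m, eps4 i k l m * omg5 Θ (e45 i) (e45 k) q *
        (px5 (e45 m) (py5 (Fin.last 4) Θ) q - px5 (Fin.last 4) (py5 (e45 m) Θ) q)) pt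
      = ∑ i, ∑ k, ∑ m, eps4 i k l m *
          (px5 (e45 l) (omg5 Θ (e45 i) (e45 k)) pt *
            (px5 (e45 m) (py5 (Fin.last 4) Θ) pt - px5 (Fin.last 4) (py5 (e45 m) Θ) pt)
          + omg5 Θ (e45 i) (e45 k) pt *
            px5 (e45 l) (fun q => px5 (e45 m) (py5 (Fin.last 4) Θ) q
              - px5 (Fin.last 4) (py5 (e45 m) Θ) q) pt) :=
    fun l => pd_expand3 _ (fun i k m => eps4 i k l m)
      (fun i k => omg5 Θ (e45 i) (e45 k))
      (fun m q => px5 (e45 m) (py5 (Fin.last 4) Θ) q - px5 (Fin.last 4) (py5 (e45 m) Θ) q)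
      (fun a b => hdω _ _) (fun m => hdB _)
  have hR : px5 (Fin.last 4)
      (fun q => ∑ i, ∑ k, ∑ l, ∑ m,
        eps4 i k l m * omg5 Θ (e45 i) (e45 k) q * omg5 Θ (e45 l) (e45 m) q) pt
      = ∑ i, ∑ k, ∑ l, ∑ m, eps4 i k l m *
          (px5 (Fin.last 4) (omg5 Θ (e45 i) (e45 k)) pt * omg5 Θ (e45 l) (e45 m) pt
          + omg5 Θ (e45 i) (e45 k) pt * px5 (Fin.last 4) (omg5 Θ (e45 l) (e45 m)) pt) :=
    pd_expand4 _ (fun i k l m => eps4 i k l m)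
      (fun i k => omg5 Θ (e45 i) (e45 k)) (fun l m => omg5 Θ (e45 l) (e45 m))
      (fun a b => hdω _ _) (fun a b => hdω _ _)
  have hω' : ∀ (c a b : Fin 5), px5 c (omg5 Θ a b) pt
      = px5 c (px5 a (py5 b Θ)) pt - px5 c (px5 b (py5 a Θ)) pt :=
    fun c a b => pd_sub _ (hd2 a b) (hd2 b a)
  have hB' : ∀ (c m : Fin 5), px5 c
      (fun q => px5 m (py5 (Fin.last 4) Θ) q - px5 (Fin.last 4) (py5 m Θ) q) pt
      = px5 c (px5 m (py5 (Fin.last 4) Θ)) pt - px5 c (px5 (Fin.last 4) (py5 m Θ)) pt :=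
    fun c m => pd_sub _ (hd2 _ _) (hd2 _ _)
  simp only [hL, hR]
  simp only [hω', hB', omg5]
  simp only [Fin.sum_univ_four]
  simp only [eps4_eq_epsZ, epsZ_eval]
  norm_num [Matrix.cons_val_zero, Matrix.cons_val_one, Matrix.cons_val_two,
    Matrix.cons_val_three, Matrix.head_cons, Matrix.tail_cons, Matrix.vecHead,
    Matrix.vecTail, Function.comp]
  simp only [hswap (e45 1) (e45 0), hswap (e45 2) (e45 0), hswap (e45 2) (e45 1),
    hswap (e45 3) (e45 0), hswap (e45 3) (e45 1), hswap (e45 3) (e45 2),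
    hswap (Fin.last 4) (e45 0), hswap (Fin.last 4) (e45 1), hswap (Fin.last 4) (e45 2),
    hswap (Fin.last 4) (e45 3)]
  ring
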